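/- Let Σ, Σ* ∈ ℝ^{d×d} be symmetric positive definite matrices. Then the Jensen–Bregman LogDet divergence is inversion invariant: d²_JBLD(Σ⁻¹, Σ*⁻¹) = d²_JBLD(Σ, Σ*). -/

import Mathlib

open Matrix

/-- The Jensen–Bregman LogDet divergence
`d²(A,B) = log det((A+B)/2) − (1/2) log det (A B)`. -/
noncomputable def jbld {d : ℕ} (A B : Matrix (Fin d) (Fin d) ℝ) : ℝ :=
  Real.log (((1 / 2 : ℝ) • (A + B)).det) - (1 / 2) * Real.log ((A * B).det)

/-- Inversion invariance of the Jensen–Bregman LogDet divergence: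
`d²(A⁻¹, B⁻¹) = d²(A, B)` for positive definite `A`, `B`. -/
theorem jbld_inversion_invariant {d : ℕ} (A B : Matrix (Fin d) (Fin d) ℝ)
    (hA : A.PosDef) (hB : B.PosDef) :
    jbld A⁻¹ B⁻¹ = jbld A B := by
  have hdA : (0:ℝ) < A.det := hA.det_pos
  have hdB : (0:ℝ) < B.det := hB.det_pos
  have huA : IsUnit A.det := (isUnit_iff_ne_zero).2 (ne_of_gt hdA)
  have huB : IsUnit B.det := (isUnit_iff_ne_zero).2 (ne_of_gt hdB)
  have hkey : (1 / 2 : ℝ) • (A⁻¹ + B⁻¹) = A⁻¹ * ((1 / 2 : ℝ) • (A + B)) * B⁻¹ := by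
    rw [Matrix.mul_smul, Matrix.smul_mul]
    congr 1
    rw [Matrix.mul_add, Matrix.add_mul, Matrix.nonsing_inv_mul A huA, Matrix.mul_assoc,
      Matrix.mul_nonsing_inv B huB, Matrix.one_mul, Matrix.mul_one, add_comm]
  have hS : ((1 / 2 : ℝ) • (A + B)).det = ((1 / 2 : ℝ) • (A⁻¹ + B⁻¹)).det * (A.det * B.det) := by
    rw [hkey, Matrix.det_mul, Matrix.det_mul, Matrix.det_nonsing_inv, Matrix.det_nonsing_inv, Ring.inverse_eq_inv, Ring.inverse_eq_inv]
    field_simp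
  have hSpos : (0:ℝ) < ((1 / 2 : ℝ) • (A + B)).det := by
    rw [Matrix.det_smul]
    have := (hA.add hB).det_pos
    positivity
  have hSinvdet : ((1 / 2 : ℝ) • (A⁻¹ + B⁻¹)).det = ((1 / 2 : ℝ) • (A + B)).det / (A.det * B.det) := by
    rw [hS]; field_simp
  unfold jbld
  rw [hSinvdet, Matrix.det_mul, Matrix.det_mul, Matrix.det_nonsing_inv,
    Matrix.det_nonsing_inv, Ring.inverse_eq_inv, Ring.inverse_eq_inv, ← mul_inv, Real.log_inv, Real.log_div (ne_of_gt hSpos)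
    (by positivity), Real.log_mul (ne_of_gt hdA) (ne_of_gt hdB)]
  ring
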